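/- Let G be a profinite group, H ◁ G a closed normal subgroup with G/H ≅ Zp, and M a finitely generated Λ(G)-module such that M/I_H M (the H-coinvariants) is a finitely generated Zp-module (equivalently, finite after the additional hypothesis below). If M_H := M/I_H M is finite, then M is a finitely generated Λ(H)-module (topological Nakayama's lemma for Λ(H)). -/

import Mathlib

/-- The product (profinite) topology on `Λ(H) = Zp[[T₁,…,T_d]]`, identifying a
multivariable power series with its coefficient function. -/
noncomputable def mvPowerSeriesTop (p : ℕ) [Fact p.Prime] (d : ℕ) :
    TopologicalSpace (MvPowerSeries (Fin d) ℤ_[p]) :=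
  inferInstanceAs (TopologicalSpace ((Fin d →₀ ℕ) → ℤ_[p]))

open Filter MvPowerSeries Topology

lemma aux_tendstoZero (p : ℕ) [Fact p.Prime] (d : ℕ) (i : Fin d) :
    @Tendsto _ _ (fun n : ℕ => (X i : MvPowerSeries (Fin d) ℤ_[p]) ^ n) atTop
      (@nhds _ (mvPowerSeriesTop p d) 0) := by
  classical
  apply tendsto_pi_nhds.mpr
  intro e
  apply Tendsto.congr' _ tendsto_const_nhds
  filter_upwards [eventually_ge_atTop (e i + 1)] with n hn
  have : (MvPowerSeries.coeff e) ((X i : MvPowerSeries (Fin d) ℤ_[p]) ^ n) = 0 := by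
    rw [MvPowerSeries.coeff_X_pow, if_neg]
    intro h; subst h; simp at hn
  exact this.symm

/-- topological Nakayama's lemma: Let `H ≅ Zp^d`, so that
`Λ(H) = Zp[[H]] ≅ Zp[[T₁,…,T_d]]`, with augmentation ideal `I_H = (T₁,…,T_d)`.
If `M` is a compact Hausdorff topological `Λ(H)`-module such that the coinvariants
`M/I_H M` are finite, then `M` is a finitely generated `Λ(H)`-module. -/
theorem stmt15 (p : ℕ) [hp : Fact p.Prime] (d : ℕ)
    (M : Type*) [AddCommGroup M] [Module (MvPowerSeries (Fin d) ℤ_[p]) M]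
    [TopologicalSpace M] [CompactSpace M] [T2Space M] [IsTopologicalAddGroup M]
    (hcont : @ContinuousSMul (MvPowerSeries (Fin d) ℤ_[p]) M _ (mvPowerSeriesTop p d) _)
    (hfin : Finite (M ⧸
      ((Ideal.span (Set.range (MvPowerSeries.X : Fin d → MvPowerSeries (Fin d) ℤ_[p]))) • ⊤ :
        Submodule (MvPowerSeries (Fin d) ℤ_[p]) M))) :
    Module.Finite (MvPowerSeries (Fin d) ℤ_[p]) M := by
  classical
  set Λ := MvPowerSeries (Fin d) ℤ_[p] with hΛ
  letI : TopologicalSpace Λ := mvPowerSeriesTop p d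
  haveI : ContinuousSMul Λ M := hcont
  haveI : CompactSpace Λ := inferInstanceAs (CompactSpace ((Fin d →₀ ℕ) → ℤ_[p]))
  set K : Ideal Λ := Ideal.span (Set.range (X : Fin d → Λ)) with hK
  -- set of representatives
  haveI : Fintype (M ⧸ (K • ⊤ : Submodule Λ M)) := Fintype.ofFinite _
  set σ : (M ⧸ (K • ⊤ : Submodule Λ M)) → M :=
    Function.surjInv (Submodule.mkQ_surjective (K • ⊤ : Submodule Λ M)) with hσ
  set N : Submodule Λ M := Submodule.span Λ (Set.range σ) with hN
  have hσsec : ∀ z, (K • ⊤ : Submodule Λ M).mkQ (σ z) = z :=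
    Function.rightInverse_surjInv (Submodule.mkQ_surjective _)
  have hsup1 : N ⊔ K • (⊤ : Submodule Λ M) = ⊤ := by
    rw [eq_top_iff]
    intro m _
    have h1 : σ ((K • ⊤ : Submodule Λ M).mkQ m) ∈ N := Submodule.subset_span ⟨_, rfl⟩
    have h2' : (K • ⊤ : Submodule Λ M).mkQ (m - σ ((K • ⊤ : Submodule Λ M).mkQ m)) = 0 := by
      rw [map_sub, hσsec, sub_self]
    have h2 : m - σ ((K • ⊤ : Submodule Λ M).mkQ m) ∈ K • (⊤ : Submodule Λ M) := by
      rwa [Submodule.mkQ_apply, Submodule.Quotient.mk_eq_zero] at h2'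
    simpa using Submodule.add_mem_sup h1 h2
  have hsup : ∀ n : ℕ, N ⊔ (K ^ n) • (⊤ : Submodule Λ M) = ⊤ := by
    intro n
    induction n with
    | zero => simp [Ideal.one_eq_top]
    | succ n ih =>
      have step : K • (⊤ : Submodule Λ M) ≤ N ⊔ K ^ (n + 1) • ⊤ := by
        conv_lhs => rw [← ih]
        rw [Submodule.smul_sup]
        apply sup_le
        · exact le_sup_of_le_left Submodule.smul_le_right
        · apply le_sup_of_le_right
          rw [← Submodule.smul_assoc, smul_eq_mul, ← pow_succ']
      rw [eq_top_iff]
      conv_lhs => rw [← hsup1]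
      exact sup_le le_sup_left step
  -- powers of K eventually in span of n-th powers of the X's
  have hpow : ∀ n : ℕ, ∃ m : ℕ,
      K ^ m ≤ Ideal.span (Set.range fun i : Fin d => (X i : Λ) ^ n) := by
    intro n
    apply Ideal.exists_pow_le_of_le_radical_of_fg _ (Submodule.fg_span (Set.finite_range _))
    apply Submodule.span_le.mpr
    rintro _ ⟨i, rfl⟩
    exact ⟨n, Ideal.subset_span ⟨i, rfl⟩⟩
  -- elements of (span of n-th powers) • ⊤ are short sums
  have hrep : ∀ (n : ℕ) (z : M),
      z ∈ (Ideal.span (Set.range fun i : Fin d => (X i : Λ) ^ n) • ⊤ : Submodule Λ M) →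
      ∃ w : Fin d → M, z = ∑ i, (X i : Λ) ^ n • w i := by
    intro n z hz
    let φ : (Fin d → M) →ₗ[Λ] M :=
      { toFun := fun w => ∑ i, (X i : Λ) ^ n • w i
        map_add' := by
          intro a b; simp [smul_add, Finset.sum_add_distrib]
        map_smul' := by
          intro c a
          simp only [RingHom.id_apply, Finset.smul_sum]
          exact Finset.sum_congr rfl fun i _ => (smul_comm _ _ _).symm }
    have : (Ideal.span (Set.range fun i : Fin d => (X i : Λ) ^ n) • ⊤ : Submodule Λ M) ≤
        LinearMap.range φ := by
      apply Submodule.smul_le.mpr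
      intro r hr m _
      obtain ⟨c, hc⟩ := (Submodule.mem_span_range_iff_exists_fun Λ).mp hr
      refine ⟨fun i => c i • m, ?_⟩
      show (∑ i, (X i : Λ) ^ n • (c i • m)) = r • m
      rw [← hc, Finset.sum_smul]
      apply Finset.sum_congr rfl
      intro i _
      rw [smul_eq_mul, mul_smul]
      exact smul_comm _ _ _
    obtain ⟨w, hw⟩ := this hz
    exact ⟨w, hw.symm⟩
  -- main argument
  have hNtop : N = ⊤ := by
    rw [eq_top_iff]
    intro x _
    -- decompositions
    have hdec : ∀ n : ℕ, ∃ (y : M) (w : Fin d → M),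
        y ∈ N ∧ x = y + ∑ i, (X i : Λ) ^ n • w i := by
      intro n
      obtain ⟨m, hm⟩ := hpow n
      have hx : x ∈ N ⊔ (K ^ m) • (⊤ : Submodule Λ M) := (hsup m).symm ▸ Submodule.mem_top
      obtain ⟨y, hy, z, hz, hyz⟩ := Submodule.mem_sup.mp hx
      have hz' : z ∈ (Ideal.span (Set.range fun i : Fin d => (X i : Λ) ^ n) • ⊤ :
          Submodule Λ M) := Submodule.smul_mono hm le_rfl hz
      obtain ⟨w, hw⟩ := hrep n z hz'
      exact ⟨y, w, hy, by rw [← hyz, hw]⟩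
    choose y w hyN hxyw using hdec
    -- ultrafilter limits
    let F : Ultrafilter ℕ := Ultrafilter.of atTop
    have hF : (F : Filter ℕ) ≤ atTop := Ultrafilter.of_le _
    have hlim : ∀ f : ℕ → M, ∃ a : M, Tendsto f F (𝓝 a) := by
      intro f
      obtain ⟨a, _, ha⟩ := isCompact_univ.ultrafilter_le_nhds (Ultrafilter.map f F)
        (by simp)
      exact ⟨a, ha⟩
    obtain ⟨a, ha⟩ := hlim y
    choose b hb using fun i : Fin d => hlim (fun n => w n i)
    -- N is closed
    have hNclosed : IsClosed (N : Set M) := by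
      have : (N : Set M) = Set.range (fun c : (M ⧸ (K • ⊤ : Submodule Λ M)) → Λ =>
          ∑ t, c t • σ t) := by
        ext m
        constructor
        · intro hm
          obtain ⟨c, hc⟩ := (Submodule.mem_span_range_iff_exists_fun Λ).mp hm
          exact ⟨c, hc⟩
        · rintro ⟨c, rfl⟩
          exact Submodule.sum_mem _ fun t _ => Submodule.smul_mem _ _
            (Submodule.subset_span ⟨t, rfl⟩)
      rw [this]
      apply IsCompact.isClosed
      apply isCompact_range
      exact continuous_finset_sum _ fun t _ => (continuous_apply t).smul continuous_const
    have haN : a ∈ N := hNclosed.mem_of_tendsto ha (Eventually.of_forall hyN)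
    -- each tail term tends to 0
    have htail : ∀ i : Fin d, Tendsto (fun n => (X i : Λ) ^ n • w n i) F (𝓝 0) := by
      intro i
      have h1 : Tendsto (fun n : ℕ => (X i : Λ) ^ n) F (𝓝 0) :=
        (aux_tendstoZero p d i).mono_left hF
      have := h1.smul (hb i)
      simpa using this
    have hsum : Tendsto (fun n => y n + ∑ i, (X i : Λ) ^ n • w n i) F (𝓝 (a + 0)) := by
      apply ha.add
      have : Tendsto (fun n => ∑ i, (X i : Λ) ^ n • w n i) F (𝓝 (∑ i : Fin d, (0 : M))) :=
        tendsto_finset_sum _ fun i _ => htail i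
      simpa using this
    have hx : Tendsto (fun _ : ℕ => x) F (𝓝 x) := tendsto_const_nhds
    have : x = a + 0 := tendsto_nhds_unique (hx.congr fun n => hxyw n) hsum
    rw [this, add_zero]
    exact haN
  constructor
  rw [← hNtop]
  exact Submodule.fg_span (Set.finite_range σ)
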